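/- Consider a two-phase periodic bang-bang inflow: x solves ẋ = a₊ − b₊x on [0, t₊] and ẋ = a₋ − b₋x on [t₊, t₊+t₋], with x(0) = x(t₊ + t₋) = v and x(t₊) = w, where a± = σ̄ ± ε, b± = σ̄ + λ ± ε, σ̄ > ε > 0, λ > 0, t₊, t₋ > 0, and the zero-average constraint t₊ = t₋ =: τ holds. Then (1/(2τ))·∫₀^{2τ} x(t) dt < σ̄/(σ̄ + λ). -/

import Mathlib

open Real Set intervalIntegral

lemma key_coth (u : ℝ) (hu : 0 < u) : 2 * (1 - Real.exp (-u)) < u * (1 + Real.exp (-u)) := by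
  have H1 : ∀ t : ℝ, HasDerivAt (fun u : ℝ => (u - 1) * Real.exp u + 1) (t * Real.exp t) t := by
    intro t
    have := (((hasDerivAt_id t).sub_const 1).mul (Real.hasDerivAt_exp t)).add_const 1
    exact this.congr_deriv (by simp only [id_eq]; ring)
  have H2 : ∀ t : ℝ, HasDerivAt (fun u : ℝ => (u - 2) * Real.exp u + u + 2)
      ((t - 1) * Real.exp t + 1) t := by
    intro t
    have := ((((hasDerivAt_id t).sub_const 2).mul (Real.hasDerivAt_exp t)).add
      (hasDerivAt_id t)).add_const 2
    exact this.congr_deriv (by simp only [id_eq]; ring)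
  have h1 : StrictMonoOn (fun u : ℝ => (u - 1) * Real.exp u + 1) (Set.Ici 0) := by
    apply strictMonoOn_of_deriv_pos (convex_Ici 0)
    · fun_prop
    · intro t ht
      rw [interior_Ici] at ht
      rw [(H1 t).deriv]
      exact mul_pos (Set.mem_Ioi.mp ht) (Real.exp_pos t)
  have h1' : ∀ t : ℝ, 0 < t → 0 < (t - 1) * Real.exp t + 1 := by
    intro t ht
    have := h1 (Set.self_mem_Ici) (Set.mem_Ici.2 ht.le) ht
    simpa using this
  have h2 : StrictMonoOn (fun u : ℝ => (u - 2) * Real.exp u + u + 2) (Set.Ici 0) := by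
    apply strictMonoOn_of_deriv_pos (convex_Ici 0)
    · fun_prop
    · intro t ht
      rw [interior_Ici] at ht
      rw [(H2 t).deriv]
      exact h1' t ht
  have h3 : 0 < (u - 2) * Real.exp u + u + 2 := by
    have := h2 (Set.self_mem_Ici) (Set.mem_Ici.2 hu.le) hu
    simpa using this
  have hep : 0 < Real.exp u := Real.exp_pos u
  rw [Real.exp_neg]
  nlinarith [mul_pos (inv_pos.2 hep) h3, mul_inv_cancel₀ hep.ne']


lemma ode_sol (a b t0 t1 : ℝ) (hb : 0 < b) (ht : t0 < t1) (x : ℝ → ℝ)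
    (hx : ∀ t ∈ Set.Icc t0 t1, HasDerivWithinAt x (a - b * x t) (Set.Icc t0 t1) t) :
    ∀ t ∈ Set.Icc t0 t1, x t = a / b + (x t0 - a / b) * Real.exp (-(b * (t - t0))) := by
  set y : ℝ → ℝ := fun t => (x t - a / b) * Real.exp (b * (t - t0)) with hy
  have hxc : ContinuousOn x (Set.Icc t0 t1) := fun t htm => (hx t htm).continuousWithinAt
  have hyd : ∀ t ∈ Set.Icc t0 t1, HasDerivWithinAt y 0 (Set.Icc t0 t1) t := by
    intro t htm
    have he : HasDerivAt (fun s : ℝ => Real.exp (b * (s - t0)))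
        (Real.exp (b * (t - t0)) * b) t := by
      have := (Real.hasDerivAt_exp (b * (t - t0))).comp t
        (((hasDerivAt_id t).sub_const t0).const_mul b)
      simpa [mul_comm, Function.comp_def, Pi.neg_def] using this
    have h1 := ((hx t htm).sub_const (a / b)).mul (he.hasDerivWithinAt (s := Set.Icc t0 t1))
    exact h1.congr_deriv (by field_simp; ring)
  have hyc : ContinuousOn y (Set.Icc t0 t1) := by
    apply ContinuousOn.mul (hxc.sub continuousOn_const)
    fun_prop
  have hconst : ∀ t ∈ Set.Icc t0 t1, y t = y t0 := by
    apply constant_of_has_deriv_right_zero hyc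
    intro t htm
    exact (hyd t ⟨htm.1, htm.2.le⟩).mono_of_mem_nhdsWithin (Icc_mem_nhdsGE_of_mem htm)
  intro t htm
  have h0 : y t0 = x t0 - a / b := by simp [hy]
  have h := hconst t htm
  rw [h0, hy] at h
  simp only at h
  have hexp : Real.exp (b * (t - t0)) ≠ 0 := (Real.exp_pos _).ne'
  have : x t - a / b = (x t0 - a / b) * Real.exp (-(b * (t - t0))) := by
    rw [Real.exp_neg, ← h]
    field_simp
  linarith [this]

lemma ode_int (a b t0 t1 : ℝ) (hb : 0 < b) (ht : t0 < t1) (x : ℝ → ℝ)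
    (hx : ∀ t ∈ Set.Icc t0 t1, HasDerivWithinAt x (a - b * x t) (Set.Icc t0 t1) t) :
    ∫ t in t0..t1, x t =
      a / b * (t1 - t0) + (x t0 - a / b) * (1 - Real.exp (-(b * (t1 - t0)))) / b := by
  have hsol := ode_sol a b t0 t1 hb ht x hx
  set c := x t0 - a / b with hc
  set G : ℝ → ℝ := fun t => a / b * t - c / b * Real.exp (-(b * (t - t0))) with hG
  have hGd : ∀ t : ℝ, HasDerivAt G (a / b + c * Real.exp (-(b * (t - t0)))) t := by
    intro t
    have he : HasDerivAt (fun s : ℝ => Real.exp (-(b * (s - t0))))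
        (Real.exp (-(b * (t - t0))) * (-b)) t := by
      have := (Real.hasDerivAt_exp (-(b * (t - t0)))).comp t
        ((((hasDerivAt_id t).sub_const t0).const_mul b).neg)
      simpa [mul_comm, Function.comp_def, Pi.neg_def] using this
    have := ((hasDerivAt_id t).const_mul (a / b)).sub (he.const_mul (c / b))
    exact this.congr_deriv (by field_simp; ring)
  have hint : IntervalIntegrable (fun t => a / b + c * Real.exp (-(b * (t - t0)))) MeasureTheory.volume t0 t1 := by
    apply Continuous.intervalIntegrable
    fun_prop
  have heq : ∫ t in t0..t1, x t = ∫ t in t0..t1, (a / b + c * Real.exp (-(b * (t - t0)))) := by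
    apply intervalIntegral.integral_congr
    intro t htm
    rw [Set.uIcc_of_le ht.le] at htm
    exact hsol t htm
  rw [heq, intervalIntegral.integral_eq_sub_of_hasDerivAt (fun t _ => hGd t) hint]
  simp only [hG]
  rw [show t0 - t0 = 0 by ring]
  simp [Real.exp_zero]
  field_simp
  ring

theorem stmt_14 (σbar lam ε τ : ℝ) (hσ : 0 < σbar) (hlam : 0 < lam)
    (hε : 0 < ε) (hεσ : ε < σbar) (hτ : 0 < τ)
    (x : ℝ → ℝ)
    (hxp : ∀ t ∈ Set.Icc 0 τ,
      HasDerivWithinAt x ((σbar + ε) - (σbar + lam + ε) * x t) (Set.Icc 0 τ) t)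
    (hxm : ∀ t ∈ Set.Icc τ (2 * τ),
      HasDerivWithinAt x ((σbar - ε) - (σbar + lam - ε) * x t) (Set.Icc τ (2 * τ)) t)
    (hper : x 0 = x (2 * τ)) :
    (1 / (2 * τ)) * ∫ t in (0:ℝ)..(2 * τ), x t < σbar / (σbar + lam) := by
  have hb : 0 < σbar + lam + ε := by linarith
  have hd : 0 < σbar + lam - ε := by linarith
  have h2τ : 0 < 2 * τ := by linarith
  have hτ2 : τ < 2 * τ := by linarith
  have hsl : 0 < σbar + lam := by linarith
  -- solutions and integrals
  have hsol1 := ode_sol (σbar + ε) (σbar + lam + ε) 0 τ hb hτ x hxp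
  have hJ1 := ode_int (σbar + ε) (σbar + lam + ε) 0 τ hb hτ x hxp
  have hsol2 := ode_sol (σbar - ε) (σbar + lam - ε) τ (2 * τ) hd hτ2 x hxm
  have hJ2 := ode_int (σbar - ε) (σbar + lam - ε) τ (2 * τ) hd hτ2 x hxm
  simp only [sub_zero, show 2 * τ - τ = τ from by ring] at hsol1 hJ1 hsol2 hJ2
  have eq1 := hsol1 τ (Set.right_mem_Icc.2 hτ.le)
  have eq2 : x 0 = (σbar - ε) / (σbar + lam - ε) +
      (x τ - (σbar - ε) / (σbar + lam - ε)) * Real.exp (-((σbar + lam - ε) * τ)) := by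
    have h := hsol2 (2 * τ) (Set.right_mem_Icc.2 hτ2.le)
    rw [show 2 * τ - τ = τ from by ring] at h
    rw [hper]
    exact h
  set b := σbar + lam + ε with hbdef
  set d := σbar + lam - ε with hddef
  set a := σbar + ε with hadef
  set c := σbar - ε with hcdef
  set E := Real.exp (-(b * τ)) with hEdef
  set F := Real.exp (-(d * τ)) with hFdef
  set v := x 0 with hvdef
  set w := x τ with hwdef
  have hE0 : 0 < E := Real.exp_pos _
  have hF0 : 0 < F := Real.exp_pos _
  have hE1 : E < 1 := by
    rw [hEdef, Real.exp_lt_one_iff]; nlinarith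
  have hF1 : F < 1 := by
    rw [hFdef, Real.exp_lt_one_iff]; nlinarith
  have hD : 0 < 1 - E * F := by nlinarith
  -- linear system solution
  have hA : (v - a / b) * (1 - E * F) = (a / b - c / d) * (F - 1) := by
    linear_combination eq2 + F * eq1
  have hB : (w - c / d) * (1 - E * F) = (a / b - c / d) * (1 - E) := by
    linear_combination eq1 + E * eq2
  have hAe : v - a / b = (a / b - c / d) * (F - 1) / (1 - E * F) := by
    rw [eq_div_iff hD.ne']; exact hA
  have hBe : w - c / d = (a / b - c / d) * (1 - E) / (1 - E * F) := by
    rw [eq_div_iff hD.ne']; exact hB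
  -- key inequalities
  have k1 : 2 * (1 - E) < b * τ * (1 + E) := key_coth (b * τ) (by positivity)
  have k2 : 2 * (1 - F) < d * τ * (1 + F) := key_coth (d * τ) (by positivity)
  have KP : (b + d) * ((1 - E) * (1 - F)) < τ * (b * d) * (1 - E * F) := by
    have m1 : (d * τ * (1 - F)) * (2 * (1 - E)) < (d * τ * (1 - F)) * (b * τ * (1 + E)) :=
      mul_lt_mul_of_pos_left k1 (mul_pos (mul_pos hd hτ) (sub_pos.2 hF1))
    have m2 : (b * τ * (1 - E)) * (2 * (1 - F)) < (b * τ * (1 - E)) * (d * τ * (1 + F)) :=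
      mul_lt_mul_of_pos_left k2 (mul_pos (mul_pos hb hτ) (sub_pos.2 hE1))
    have hsum := add_lt_add m1 m2
    refine lt_of_mul_lt_mul_left
      (show (2 * τ) * ((b + d) * ((1 - E) * (1 - F))) < (2 * τ) * (τ * (b * d) * (1 - E * F))
        from ?_) h2τ.le
    ring_nf at hsum ⊢
    linarith
  -- split the integral
  have hint1 : IntervalIntegrable x MeasureTheory.volume 0 τ := by
    apply ContinuousOn.intervalIntegrable
    rw [Set.uIcc_of_le hτ.le]
    exact fun t ht => (hxp t ht).continuousWithinAt
  have hint2 : IntervalIntegrable x MeasureTheory.volume τ (2 * τ) := by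
    apply ContinuousOn.intervalIntegrable
    rw [Set.uIcc_of_le hτ2.le]
    exact fun t ht => (hxm t ht).continuousWithinAt
  have hsplit := intervalIntegral.integral_add_adjacent_intervals hint1 hint2
  rw [← hsplit, hJ1, hJ2, hAe, hBe]
  rw [one_div_mul_eq_div, div_lt_div_iff₀ h2τ hsl]
  rw [← sub_pos]
  have hdiff : σbar * (2 * τ) -
      (a / b * τ + (a / b - c / d) * (F - 1) / (1 - E * F) * (1 - E) / b +
        (c / d * τ + (a / b - c / d) * (1 - E) / (1 - E * F) * (1 - F) / d)) * (σbar + lam) =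
      2 * ε ^ 2 * lam * (τ * (b * d) * (1 - E * F) - (b + d) * ((1 - E) * (1 - F))) /
        (b ^ 2 * d ^ 2 * (1 - E * F)) := by
    rw [hbdef, hddef, hadef, hcdef]
    have hbne : σbar + lam + ε ≠ 0 := ne_of_gt (by linarith)
    have hdne : σbar + lam - ε ≠ 0 := ne_of_gt (by linarith)
    have hDne : 1 - E * F ≠ 0 := hD.ne'
    have hDne' : 1 - F * E ≠ 0 := by rw [mul_comm]; exact hD.ne'
    field_simp
    ring
  rw [hdiff]
  apply div_pos
  · exact mul_pos (by positivity) (sub_pos.2 KP)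
  · exact mul_pos (mul_pos (pow_pos hb 2) (pow_pos hd 2)) hD
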